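/- Let ω be a real number. For τ > 0 and ε ∈ (0,1), define e_τ(ε) = (1 + exp(−(log ε − log(1 − ε) + ω)/τ))⁻¹, i.e., e_τ(ε) = σ((log ε − log(1−ε) + ω)/τ) where σ is the logistic sigmoid. Then for every threshold c with 0 < c < 1, the probability (with ε uniformly distributed on (0,1)) of the event {ε ∈ (0,1) : e_τ(ε) > c} tends to (1 + exp(−ω))⁻¹ as τ → 0⁺. In other words, e_τ converges in distribution to a Bernoulli random variable with success probability p = (1 + exp(−ω))⁻¹. -/

import Mathlib

open MeasureTheory Filter

private lemma sig_strictMono : StrictMono (fun x : ℝ => (1 + Real.exp (-x))⁻¹) := by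
  intro x y hxy
  have h1 : (0:ℝ) < 1 + Real.exp (-y) := by positivity
  have h2 : 1 + Real.exp (-y) < 1 + Real.exp (-x) := by
    have := Real.exp_lt_exp.mpr (neg_lt_neg hxy)
    linarith
  simpa using one_div_lt_one_div_of_lt h1 h2

private lemma sig_logit {a : ℝ} (h0 : 0 < a) (h1 : a < 1) :
    (1 + Real.exp (-(Real.log a - Real.log (1 - a))))⁻¹ = a := by
  have h1' : (0:ℝ) < 1 - a := by linarith
  have : Real.exp (-(Real.log a - Real.log (1 - a))) = (1 - a) / a := by
    rw [neg_sub, Real.exp_sub, Real.exp_log h1', Real.exp_log h0]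
  rw [this]
  field_simp
  ring

private lemma sig_pos (t : ℝ) : 0 < (1 + Real.exp (-t))⁻¹ := by positivity

private lemma sig_lt_one (t : ℝ) : (1 + Real.exp (-t))⁻¹ < 1 := by
  rw [inv_lt_one_iff₀]
  right
  have := Real.exp_pos (-t)
  linarith

/-- For every threshold `0 < c < 1`, the probability (with `ε` uniform on `(0,1)`) that
`σ((log ε - log (1 - ε) + ω) / τ) > c` tends to `(1 + exp (-ω))⁻¹` as `τ → 0⁺`, where
`σ (x) = (1 + exp (-x))⁻¹` is the logistic sigmoid: the relaxed sample converges in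
distribution to a Bernoulli random variable with success probability `(1 + exp (-ω))⁻¹`. -/
theorem gumbel_softmax_limit (ω : ℝ) (c : ℝ) (hc0 : 0 < c) (hc1 : c < 1) :
    Tendsto
      (fun τ : ℝ =>
        (volume.restrict (Set.Ioo (0 : ℝ) 1))
          {ε : ℝ | (1 + Real.exp (-((Real.log ε - Real.log (1 - ε) + ω) / τ)))⁻¹ > c})
      (nhdsWithin 0 (Set.Ioi 0))
      (nhds (ENNReal.ofReal (1 + Real.exp (-ω))⁻¹)) := by
  set b : ℝ := Real.log c - Real.log (1 - c) with hb
  -- measure formula for τ > 0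
  have hmeas : ∀ τ : ℝ, 0 < τ →
      (volume.restrict (Set.Ioo (0 : ℝ) 1))
        {ε : ℝ | (1 + Real.exp (-((Real.log ε - Real.log (1 - ε) + ω) / τ)))⁻¹ > c}
      = ENNReal.ofReal (1 - (1 + Real.exp (-(τ * b - ω)))⁻¹) := by
    intro τ hτ
    set s : ℝ := (1 + Real.exp (-(τ * b - ω)))⁻¹ with hs
    have hset : {ε : ℝ | (1 + Real.exp (-((Real.log ε - Real.log (1 - ε) + ω) / τ)))⁻¹ > c}
        ∩ Set.Ioo (0:ℝ) 1 = Set.Ioo s 1 := by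
      ext ε
      simp only [Set.mem_inter_iff, Set.mem_setOf_eq, Set.mem_Ioo]
      constructor
      · rintro ⟨hgt, hε0, hε1⟩
        refine ⟨?_, hε1⟩
        -- c = σ(b)
        have hcb : c = (1 + Real.exp (-b))⁻¹ := (sig_logit hc0 hc1).symm
        rw [hcb] at hgt
        have hub : b < (Real.log ε - Real.log (1 - ε) + ω) / τ :=
          sig_strictMono.lt_iff_lt.mp hgt
        have hlog : τ * b - ω < Real.log ε - Real.log (1 - ε) := by
          have := (lt_div_iff₀ hτ).mp hub
          linarith
        have : (1 + Real.exp (-(τ * b - ω)))⁻¹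
            < (1 + Real.exp (-(Real.log ε - Real.log (1 - ε))))⁻¹ :=
          sig_strictMono hlog
        rwa [sig_logit hε0 hε1] at this
      · rintro ⟨hsε, hε1⟩
        have hε0 : 0 < ε := lt_trans (sig_pos _) hsε
        refine ⟨?_, hε0, hε1⟩
        have h1 : (1 + Real.exp (-(τ * b - ω)))⁻¹
            < (1 + Real.exp (-(Real.log ε - Real.log (1 - ε))))⁻¹ := by
          rw [sig_logit hε0 hε1]; exact hsε
        have hlog : τ * b - ω < Real.log ε - Real.log (1 - ε) :=
          sig_strictMono.lt_iff_lt.mp h1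
        have hub : b < (Real.log ε - Real.log (1 - ε) + ω) / τ := by
          rw [lt_div_iff₀ hτ]
          nlinarith
        have hcb : c = (1 + Real.exp (-b))⁻¹ := (sig_logit hc0 hc1).symm
        rw [hcb]
        exact sig_strictMono hub
    rw [Measure.restrict_apply' measurableSet_Ioo, hset, Real.volume_Ioo]
  -- final value equality
  have hval : (1 - (1 + Real.exp (-(0 * b - ω)))⁻¹) = (1 + Real.exp (-ω))⁻¹ := by
    rw [zero_mul, zero_sub, neg_neg, Real.exp_neg]
    have h1 : (0:ℝ) < Real.exp ω := Real.exp_pos ω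
    field_simp
    ring
  have hcont : Tendsto (fun τ : ℝ => ENNReal.ofReal (1 - (1 + Real.exp (-(τ * b - ω)))⁻¹))
      (nhdsWithin 0 (Set.Ioi 0)) (nhds (ENNReal.ofReal (1 + Real.exp (-ω))⁻¹)) := by
    have hc : Continuous (fun τ : ℝ =>
        ENNReal.ofReal (1 - (1 + Real.exp (-(τ * b - ω)))⁻¹)) := by
      apply ENNReal.continuous_ofReal.comp
      apply Continuous.sub continuous_const
      apply Continuous.inv₀
      · continuity
      · intro x; positivity
    have := (hc.tendsto 0).mono_left (nhdsWithin_le_nhds (s := Set.Ioi (0:ℝ)))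
    rwa [hval] at this
  refine hcont.congr' ?_
  filter_upwards [self_mem_nhdsWithin] with τ hτ
  exact (hmeas τ hτ).symm
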